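/- Let P = {x ∈ ℝⁿ : Ax = b, Bx ≤ d}, let x₀ ∈ P, and let y ∈ ℝⁿ be strictly feasible at x₀. If g ∈ ℝⁿ satisfies Ag = 0 and g is conformal to y with respect to B (i.e., for every index i, (Bg)_i·(By)_i ≥ 0, and (By)_i = 0 implies (Bg)_i = 0), then g is strictly feasible at x₀. -/
import Mathlib


/-- If `y` is strictly feasible at `x₀ ∈ P`, `A g = 0`, and `g` is conformal
to `y` with respect to `B`, then `g` is strictly feasible at `x₀`. -/
theorem conformal_strictly_feasible
    (n mA mB : ℕ) (A : Matrix (Fin mA) (Fin n) ℝ) (B : Matrix (Fin mB) (Fin n) ℝ)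
    (b : Fin mA → ℝ) (d : Fin mB → ℝ)
    (P : Set (Fin n → ℝ))
    (hP : P = {x | A.mulVec x = b ∧ ∀ i, B.mulVec x i ≤ d i})
    (x₀ : Fin n → ℝ) (hx₀ : x₀ ∈ P)
    (y : Fin n → ℝ) (hy : ∃ α : ℝ, 0 < α ∧ x₀ + α • y ∈ P)
    (g : Fin n → ℝ) (hAg : A.mulVec g = 0)
    (hconf : ∀ i, B.mulVec g i * B.mulVec y i ≥ 0 ∧
      (B.mulVec y i = 0 → B.mulVec g i = 0)) :
    ∃ α : ℝ, 0 < α ∧ x₀ + α • g ∈ P := by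
  subst hP
  obtain ⟨hAx₀, hBx₀⟩ := hx₀
  obtain ⟨α, hα, hyP⟩ := hy
  have hBy : ∀ i, B.mulVec x₀ i + α * B.mulVec y i ≤ d i := by
    intro i
    have := hyP.2 i
    simpa [Matrix.mulVec_add, Matrix.mulVec_smul, smul_eq_mul] using this
  -- if B.mulVec g i > 0 then B.mulVec y i > 0
  have hpos : ∀ i, 0 < B.mulVec g i → 0 < B.mulVec y i := by
    intro i hi
    rcases (hconf i) with ⟨hprod, himp⟩
    rcases lt_or_eq_of_le (nonneg_of_mul_nonneg_right hprod hi) with h | h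
    · exact h
    · exact absurd (himp h.symm) (ne_of_gt hi)
  classical
  set S := Finset.univ.filter (fun i => 0 < B.mulVec g i) with hS
  have hA' : ∀ ε : ℝ, A.mulVec (x₀ + ε • g) = b := by
    intro ε
    simp [Matrix.mulVec_add, Matrix.mulVec_smul, hAg, hAx₀]
  by_cases hne : S.Nonempty
  · set f : Fin mB → ℝ := fun i => α * B.mulVec y i / B.mulVec g i with hf
    set ε := min α (S.inf' hne f) with hε
    have hfpos : ∀ i ∈ S, 0 < f i := by
      intro i hi
      have hgi : 0 < B.mulVec g i := (Finset.mem_filter.mp hi).2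
      exact div_pos (mul_pos hα (hpos i hgi)) hgi
    have hεpos : 0 < ε := by
      refine lt_min hα ?_
      exact (Finset.lt_inf'_iff hne).mpr hfpos
    refine ⟨ε, hεpos, hA' ε, ?_⟩
    intro i
    have key : B.mulVec x₀ i + ε * B.mulVec g i ≤ d i := by
      by_cases hgi : 0 < B.mulVec g i
      · have hiS : i ∈ S := Finset.mem_filter.mpr ⟨Finset.mem_univ i, hgi⟩
        have h1 : ε ≤ f i := le_trans (min_le_right _ _) (Finset.inf'_le f hiS)
        have h2 : ε * B.mulVec g i ≤ α * B.mulVec y i := by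
          rw [hf] at h1
          calc ε * B.mulVec g i ≤ (α * B.mulVec y i / B.mulVec g i) * B.mulVec g i :=
                mul_le_mul_of_nonneg_right h1 (le_of_lt hgi)
            _ = α * B.mulVec y i := div_mul_cancel₀ _ (ne_of_gt hgi)
        linarith [hBy i]
      · push_neg at hgi
        have : ε * B.mulVec g i ≤ 0 := mul_nonpos_of_nonneg_of_nonpos (le_of_lt hεpos) hgi
        linarith [hBx₀ i]
    simpa [Matrix.mulVec_add, Matrix.mulVec_smul, smul_eq_mul] using key
  · refine ⟨1, one_pos, hA' 1, ?_⟩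
    intro i
    have hgi : B.mulVec g i ≤ 0 := by
      by_contra h
      push_neg at h
      exact hne ⟨i, Finset.mem_filter.mpr ⟨Finset.mem_univ i, h⟩⟩
    have key : B.mulVec x₀ i + 1 * B.mulVec g i ≤ d i := by linarith [hBx₀ i]
    simpa [Matrix.mulVec_add, Matrix.mulVec_smul, smul_eq_mul] using key
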